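/- There exists a constant C > 0, depending only on n and the chosen norm, such that for every h ∈ (0,1] and all n×n complex matrices a, b, c with ‖a‖ ≤ h, ‖b‖ ≤ h, ‖c‖ ≤ h and ‖a + b + c‖ ≤ h², one has ‖ (1 − exp(−a)·exp(−b)·exp(−c)) − ( (a + b + c) + (1/6)( [c,b] + [b,a] + [a,c] ) ) ‖ ≤ C h³. -/

import Mathlib

attribute [local instance]
  Matrix.frobeniusNormedAddCommGroup Matrix.frobeniusNormedRing
  Matrix.frobeniusNormedSpace Matrix.frobeniusNormedAlgebra

open NormedSpace Nat

lemma wd_pow_le_fac (n : ℕ) : (2:ℝ)^n ≤ ((n+3))! := by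
  induction n with
  | zero => norm_num [Nat.factorial]
  | succ k ih =>
    have : (((k+3+1))! : ℝ) = (k+4) * (k+3)! := by
      push_cast [Nat.factorial_succ]; ring
    calc (2:ℝ)^(k+1) = 2 * 2^k := by ring
    _ ≤ 2 * (k+3)! := by nlinarith [pow_pos (by norm_num : (0:ℝ) < 2) k]
    _ ≤ (k+4) * (k+3)! := by
        have : (0:ℝ) ≤ ((k+3)! : ℝ) := by positivity
        nlinarith
    _ = (((k+3+1))! : ℝ) := this.symm

lemma wd_exp_tail {n : ℕ} (x : Matrix (Fin n) (Fin n) ℂ) (hx : ‖x‖ ≤ 1) :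
    ‖exp x - (1 + x + (2:ℂ)⁻¹ • x^2)‖ ≤ 2 * ‖x‖^3 := by
  have hs := expSeries_summable' (𝕂 := ℂ) x
  have hsum := Summable.sum_add_tsum_nat_add (f := fun k => ((k ! : ℂ))⁻¹ • x ^ k) 3 hs
  have hrange : ∑ i ∈ Finset.range 3, ((i ! : ℂ))⁻¹ • x ^ i = 1 + x + (2:ℂ)⁻¹ • x^2 := by
    simp [Finset.sum_range_succ, Nat.factorial]
  have hexp : exp x - (1 + x + (2:ℂ)⁻¹ • x^2) = ∑' k, (((k+3)! : ℂ))⁻¹ • x ^ (k+3) := by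
    rw [exp_eq_tsum ℂ]
    beta_reduce
    rw [← hsum, hrange]
    abel
  rw [hexp]
  have hb : ∀ k : ℕ, ‖(((k+3)! : ℂ))⁻¹ • x ^ (k+3)‖ ≤ ‖x‖^3 * (1/2:ℝ)^k := by
    intro k
    rw [norm_smul]
    have h1 : ‖(((k+3)! : ℂ))⁻¹‖ = (((k+3)! : ℝ))⁻¹ := by
      rw [norm_inv]; norm_cast
    have h2 : ‖x ^ (k+3)‖ ≤ ‖x‖^(k+3) := norm_pow_le' x (by omega)
    have h3 : ‖x‖^(k+3) ≤ ‖x‖^3 := by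
      apply pow_le_pow_of_le_one (norm_nonneg x) hx; omega
    have h4 : (((k+3)! : ℝ))⁻¹ ≤ (1/2:ℝ)^k := by
      rw [div_pow, one_pow, one_div]
      exact inv_anti₀ (by positivity) (wd_pow_le_fac k)
    calc ‖(((k+3)! : ℂ))⁻¹‖ * ‖x ^ (k+3)‖ ≤ (((k+3)! : ℝ))⁻¹ * ‖x‖^3 := by
          rw [h1]; exact mul_le_mul_of_nonneg_left (h2.trans h3) (by positivity)
    _ ≤ (1/2:ℝ)^k * ‖x‖^3 := mul_le_mul_of_nonneg_right h4 (by positivity)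
    _ = ‖x‖^3 * (1/2:ℝ)^k := mul_comm _ _
  have hgs : HasSum (fun k : ℕ => ‖x‖^3 * (1/2:ℝ)^k) (2 * ‖x‖^3) := by
    have := (hasSum_geometric_of_lt_one (by norm_num : (0:ℝ) ≤ 1/2)
      (by norm_num : (1/2:ℝ) < 1)).mul_left (‖x‖^3)
    rw [show (2 * ‖x‖^3) = ‖x‖^3 * (1 - 1/2)⁻¹ by norm_num [mul_comm]]
    exact this
  exact tsum_of_norm_bounded hgs hb

lemma wd_key_identity {n : ℕ} (a b c Ra Rb Rc : Matrix (Fin n) (Fin n) ℂ) :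
    (1 - ((1 - a + (2:ℂ)⁻¹ • a^2) + Ra) * (((1 - b + (2:ℂ)⁻¹ • b^2) + Rb) *
        (((1 - c + (2:ℂ)⁻¹ • c^2) + Rc))))
      - ((a + b + c) + ((1 : ℂ)/6) • (⁅c, b⁆ + ⁅b, a⁆ + ⁅a, c⁆))
    = -(Ra * (((1 - b + (2:ℂ)⁻¹ • b^2) + Rb) * ((1 - c + (2:ℂ)⁻¹ • c^2) + Rc)))
      - ((1 - a + (2:ℂ)⁻¹ • a^2) * Rb) * ((1 - c + (2:ℂ)⁻¹ • c^2) + Rc)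
      - ((1 - a + (2:ℂ)⁻¹ • a^2) * (1 - b + (2:ℂ)⁻¹ • b^2)) * Rc
      - (2:ℂ)⁻¹ • ((a + b + c) * (a + b + c))
      + ((2:ℂ)/3) • ⁅a + b + c, a⁆ + ((1:ℂ)/3) • ⁅a + b + c, b⁆
      - ((-(2:ℂ)⁻¹) • (a * (b * b)) + (-(2:ℂ)⁻¹) • (a * (a * b))
          + (4:ℂ)⁻¹ • (a * (a * (b * b)))) * (1 - c + (2:ℂ)⁻¹ • c^2)
      - (-(((2:ℂ)⁻¹ • (a * a) + (2:ℂ)⁻¹ • (b * b) + a * b) * c)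
          - (2:ℂ)⁻¹ • ((a + b) * (c * c))
          + (2:ℂ)⁻¹ • (((2:ℂ)⁻¹ • (a * a) + (2:ℂ)⁻¹ • (b * b) + a * b) * (c * c))) := by
  simp only [Ring.lie_def, pow_two, mul_add, add_mul, mul_sub, sub_mul, mul_one, one_mul,
    smul_mul_assoc, mul_smul_comm, smul_smul, smul_sub, smul_add, neg_mul, mul_neg,
    mul_assoc, neg_smul, smul_neg, neg_neg, neg_add]
  module
lemma wd_nm {E : Type*} [NormedRing E] {x y : E} {p q : ℝ} (hx : ‖x‖ ≤ p) (hy : ‖y‖ ≤ q) :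
    ‖x * y‖ ≤ p * q :=
  le_trans (norm_mul_le _ _)
    (mul_le_mul hx hy (norm_nonneg _) (le_trans (norm_nonneg _) hx))

lemma wd_basic {n : ℕ} {x : Matrix (Fin n) (Fin n) ℂ} {h : ℝ} (hx : ‖x‖ ≤ h)
    (h0 : 0 < h) (h1 : h ≤ 1) :
    ‖exp (-x) - (1 - x + (2:ℂ)⁻¹ • x^2)‖ ≤ 2 * h^3 ∧
      ‖(1:Matrix (Fin n) (Fin n) ℂ) - x + (2:ℂ)⁻¹ • x^2‖ ≤ ‖(1:Matrix (Fin n) (Fin n) ℂ)‖ + 2 := by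
  have hx1 : ‖x‖ ≤ 1 := hx.trans h1
  have hx3 : ‖x‖^3 ≤ h^3 := pow_le_pow_left₀ (norm_nonneg x) hx 3
  constructor
  · have t := wd_exp_tail (-x) (by rwa [norm_neg])
    have e : (1:Matrix (Fin n) (Fin n) ℂ) + (-x) + (2:ℂ)⁻¹ • (-x)^2
        = 1 - x + (2:ℂ)⁻¹ • x^2 := by
      rw [neg_sq, sub_eq_add_neg]
    rw [e, norm_neg] at t
    calc ‖exp (-x) - (1 - x + (2:ℂ)⁻¹ • x^2)‖ ≤ 2 * ‖x‖^3 := t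
    _ ≤ 2 * h^3 := by linarith
  · have hsq : ‖x^2‖ ≤ 1 := by
      calc ‖x^2‖ ≤ ‖x‖^2 := norm_pow_le' x (by norm_num)
      _ ≤ 1 := by nlinarith [norm_nonneg x]
    calc ‖(1:Matrix (Fin n) (Fin n) ℂ) - x + (2:ℂ)⁻¹ • x^2‖
        ≤ ‖(1:Matrix (Fin n) (Fin n) ℂ) - x‖ + ‖(2:ℂ)⁻¹ • x^2‖ := norm_add_le _ _
    _ ≤ (‖(1:Matrix (Fin n) (Fin n) ℂ)‖ + ‖x‖) + ‖(2:ℂ)⁻¹‖ * ‖x^2‖ := by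
        rw [norm_smul]; exact _root_.add_le_add (norm_sub_le _ _) le_rfl
    _ ≤ (‖(1:Matrix (Fin n) (Fin n) ℂ)‖ + 1) + 2⁻¹ * 1 := by
        have : ‖((2:ℂ))⁻¹‖ = 2⁻¹ := by norm_num
        rw [this]
        have := mul_le_mul_of_nonneg_left hsq (by norm_num : (0:ℝ) ≤ 2⁻¹)
        linarith
    _ ≤ ‖(1:Matrix (Fin n) (Fin n) ℂ)‖ + 2 := by linarith

set_option maxHeartbeats 1000000 in
theorem wilson_deficit_consistency (n : ℕ) :
    ∃ C : ℝ, 0 < C ∧ ∀ h : ℝ, h ∈ Set.Ioc (0 : ℝ) 1 →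
      ∀ a b c : Matrix (Fin n) (Fin n) ℂ,
        ‖a‖ ≤ h → ‖b‖ ≤ h → ‖c‖ ≤ h → ‖a + b + c‖ ≤ h ^ 2 →
        ‖(1 - exp (-a) * exp (-b) * exp (-c)) -
            ((a + b + c) + ((1 : ℂ)/6) • (⁅c, b⁆ + ⁅b, a⁆ + ⁅a, c⁆))‖ ≤ C * h ^ 3 := by
  set N : ℝ := ‖(1 : Matrix (Fin n) (Fin n) ℂ)‖ + 4 with hNdef
  have hN4 : (4:ℝ) ≤ N := by
    have := norm_nonneg (1 : Matrix (Fin n) (Fin n) ℂ); simp only [hNdef]; linarith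
  refine ⟨24 * N^2 + 3 * N + 8, by nlinarith [sq_nonneg N], ?_⟩
  rintro h ⟨h0, h1⟩ a b c ha hb hc hs
  have h3pos : (0:ℝ) < h^3 := by positivity
  have h43 : h^4 ≤ h^3 := pow_le_pow_of_le_one h0.le h1 (by norm_num)
  obtain ⟨hRa, hQa⟩ := wd_basic ha h0 h1
  obtain ⟨hRb, hQb⟩ := wd_basic hb h0 h1
  obtain ⟨hRc, hQc⟩ := wd_basic hc h0 h1
  set QA := (1:Matrix (Fin n) (Fin n) ℂ) - a + (2:ℂ)⁻¹ • a^2 with hQAdef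
  set QB := (1:Matrix (Fin n) (Fin n) ℂ) - b + (2:ℂ)⁻¹ • b^2 with hQBdef
  set QC := (1:Matrix (Fin n) (Fin n) ℂ) - c + (2:ℂ)⁻¹ • c^2 with hQCdef
  set Ra := exp (-a) - QA with hRadef
  set Rb := exp (-b) - QB with hRbdef
  set Rc := exp (-c) - QC with hRcdef
  have hQaN : ‖QA‖ ≤ N := by simp only [hNdef]; linarith
  have hQbN : ‖QB‖ ≤ N := by simp only [hNdef]; linarith
  have hQcN : ‖QC‖ ≤ N := by simp only [hNdef]; linarith
  have h32 : 2 * h^3 ≤ 2 := by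
    have := pow_le_one₀ h0.le h1 (n := 3)
    linarith
  have hEaN : ‖QA + Ra‖ ≤ 2 * N :=
    (norm_add_le _ _).trans (by linarith)
  have hEbN : ‖QB + Rb‖ ≤ 2 * N :=
    (norm_add_le _ _).trans (by linarith)
  have hEcN : ‖QC + Rc‖ ≤ 2 * N :=
    (norm_add_le _ _).trans (by linarith)
  have hEa : exp (-a) = QA + Ra := by rw [hRadef]; abel
  have hEb : exp (-b) = QB + Rb := by rw [hRbdef]; abel
  have hEc : exp (-c) = QC + Rc := by rw [hRcdef]; abel
  rw [mul_assoc, hEa, hEb, hEc, wd_key_identity]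
  -- bounds on the eight summands
  have tA : ‖Ra * ((QB + Rb) * (QC + Rc))‖ ≤ 8 * N^2 * h^3 :=
    (wd_nm hRa (wd_nm hEbN hEcN)).trans_eq (by ring)
  have tB : ‖(QA * Rb) * (QC + Rc)‖ ≤ 4 * N^2 * h^3 :=
    (wd_nm (wd_nm hQaN hRb) hEcN).trans_eq (by ring)
  have tC : ‖(QA * QB) * Rc‖ ≤ 2 * N^2 * h^3 :=
    (wd_nm (wd_nm hQaN hQbN) hRc).trans_eq (by ring)
  have tD : ‖(2:ℂ)⁻¹ • ((a + b + c) * (a + b + c))‖ ≤ h^3 := by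
    rw [norm_smul]
    have e : ‖((2:ℂ))⁻¹‖ = 2⁻¹ := by norm_num
    rw [e]
    have := wd_nm hs hs
    have h2s : 2⁻¹ * ‖(a + b + c) * (a + b + c)‖ ≤ 2⁻¹ * (h^2 * h^2) :=
      mul_le_mul_of_nonneg_left this (by norm_num)
    linarith
  have e21 : h^2 * h = h^3 := by ring
  have e12 : h * h^2 = h^3 := by ring
  have e22 : h^2 * h^2 = h^4 := by ring
  have tcomA : ‖⁅a + b + c, a⁆‖ ≤ 2 * h^3 := by
    rw [Ring.lie_def]
    refine (norm_sub_le _ _).trans ?_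
    have u1 := wd_nm hs ha
    have u2 := wd_nm ha hs
    linarith
  have tcomB : ‖⁅a + b + c, b⁆‖ ≤ 2 * h^3 := by
    rw [Ring.lie_def]
    refine (norm_sub_le _ _).trans ?_
    have u1 := wd_nm hs hb
    have u2 := wd_nm hb hs
    linarith
  have tE : ‖((2:ℂ)/3) • ⁅a + b + c, a⁆‖ ≤ (4/3) * h^3 := by
    rw [norm_smul]
    have e : ‖((2:ℂ)/3)‖ = 2/3 := by norm_num
    rw [e]
    have := mul_le_mul_of_nonneg_left tcomA (by norm_num : (0:ℝ) ≤ 2/3)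
    linarith
  have tF : ‖((1:ℂ)/3) • ⁅a + b + c, b⁆‖ ≤ (2/3) * h^3 := by
    rw [norm_smul]
    have e : ‖((1:ℂ)/3)‖ = 1/3 := by norm_num
    rw [e]
    have := mul_le_mul_of_nonneg_left tcomB (by norm_num : (0:ℝ) ≤ 1/3)
    linarith
  have habc : h * (h * h) = h^3 := by ring
  have tT2 : ‖(-(2:ℂ)⁻¹) • (a * (b * b)) + (-(2:ℂ)⁻¹) • (a * (a * b))
      + (4:ℂ)⁻¹ • (a * (a * (b * b)))‖ ≤ (3/2) * h^3 := by
    have e1 : ‖(-(2:ℂ)⁻¹)‖ = 2⁻¹ := by norm_num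
    have e2 : ‖((4:ℂ))⁻¹‖ = 4⁻¹ := by norm_num
    have u1 : ‖a * (b * b)‖ ≤ h^3 := (wd_nm ha (wd_nm hb hb)).trans_eq habc
    have u2 : ‖a * (a * b)‖ ≤ h^3 := (wd_nm ha (wd_nm ha hb)).trans_eq habc
    have u3 : ‖a * (a * (b * b))‖ ≤ h^4 :=
      (wd_nm ha (wd_nm ha (wd_nm hb hb))).trans_eq (by ring)
    calc ‖(-(2:ℂ)⁻¹) • (a * (b * b)) + (-(2:ℂ)⁻¹) • (a * (a * b))
          + (4:ℂ)⁻¹ • (a * (a * (b * b)))‖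
        ≤ ‖(-(2:ℂ)⁻¹) • (a * (b * b)) + (-(2:ℂ)⁻¹) • (a * (a * b))‖
          + ‖(4:ℂ)⁻¹ • (a * (a * (b * b)))‖ := norm_add_le _ _
    _ ≤ (‖(-(2:ℂ)⁻¹) • (a * (b * b))‖ + ‖(-(2:ℂ)⁻¹) • (a * (a * b))‖)
          + ‖(4:ℂ)⁻¹ • (a * (a * (b * b)))‖ := by
        exact _root_.add_le_add (norm_add_le _ _) le_rfl
    _ ≤ (2⁻¹ * h^3 + 2⁻¹ * h^3) + 4⁻¹ * h^4 := by
        rw [norm_smul, norm_smul, norm_smul, e1, e2]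
        have q1 := mul_le_mul_of_nonneg_left u1 (by norm_num : (0:ℝ) ≤ 2⁻¹)
        have q2 := mul_le_mul_of_nonneg_left u2 (by norm_num : (0:ℝ) ≤ 2⁻¹)
        have q3 := mul_le_mul_of_nonneg_left u3 (by norm_num : (0:ℝ) ≤ 4⁻¹)
        refine _root_.add_le_add (_root_.add_le_add ?_ ?_) ?_ <;> linarith
    _ ≤ (3/2) * h^3 := by linarith
  have tG : ‖((-(2:ℂ)⁻¹) • (a * (b * b)) + (-(2:ℂ)⁻¹) • (a * (a * b))
      + (4:ℂ)⁻¹ • (a * (a * (b * b)))) * QC‖ ≤ (3/2) * N * h^3 :=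
    (wd_nm tT2 hQcN).trans_eq (by ring)
  have hX : ‖(2:ℂ)⁻¹ • (a * a) + (2:ℂ)⁻¹ • (b * b) + a * b‖ ≤ 2 * h^2 := by
    have e1 : ‖((2:ℂ))⁻¹‖ = 2⁻¹ := by norm_num
    have u1 : ‖a * a‖ ≤ h^2 := (wd_nm ha ha).trans_eq (by ring)
    have u2 : ‖b * b‖ ≤ h^2 := (wd_nm hb hb).trans_eq (by ring)
    have u3 : ‖a * b‖ ≤ h^2 := (wd_nm ha hb).trans_eq (by ring)
    calc ‖(2:ℂ)⁻¹ • (a * a) + (2:ℂ)⁻¹ • (b * b) + a * b‖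
        ≤ ‖(2:ℂ)⁻¹ • (a * a)‖ + ‖(2:ℂ)⁻¹ • (b * b)‖ + ‖a * b‖ :=
      (norm_add_le _ _).trans (_root_.add_le_add (norm_add_le _ _) le_rfl)
    _ ≤ 2 * h^2 := by
        rw [norm_smul, norm_smul, e1]
        have q1 := mul_le_mul_of_nonneg_left u1 (by norm_num : (0:ℝ) ≤ 2⁻¹)
        have q2 := mul_le_mul_of_nonneg_left u2 (by norm_num : (0:ℝ) ≤ 2⁻¹)
        linarith
  have tH : ‖-(((2:ℂ)⁻¹ • (a * a) + (2:ℂ)⁻¹ • (b * b) + a * b) * c)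
      - (2:ℂ)⁻¹ • ((a + b) * (c * c))
      + (2:ℂ)⁻¹ • (((2:ℂ)⁻¹ • (a * a) + (2:ℂ)⁻¹ • (b * b) + a * b) * (c * c))‖
      ≤ 5 * h^3 := by
    have e1 : ‖((2:ℂ))⁻¹‖ = 2⁻¹ := by norm_num
    have hab2 : ‖a + b‖ ≤ 2 * h := (norm_add_le _ _).trans (by linarith)
    have u1 : ‖((2:ℂ)⁻¹ • (a * a) + (2:ℂ)⁻¹ • (b * b) + a * b) * c‖ ≤ 2 * h^2 * h :=
      wd_nm hX hc
    have u2 : ‖(a + b) * (c * c)‖ ≤ 2 * h * h^2 :=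
      (wd_nm hab2 (wd_nm hc hc)).trans_eq (by ring)
    have u3 : ‖((2:ℂ)⁻¹ • (a * a) + (2:ℂ)⁻¹ • (b * b) + a * b) * (c * c)‖ ≤ 2 * h^2 * h^2 :=
      (wd_nm hX (wd_nm hc hc)).trans_eq (by ring)
    calc ‖-(((2:ℂ)⁻¹ • (a * a) + (2:ℂ)⁻¹ • (b * b) + a * b) * c)
          - (2:ℂ)⁻¹ • ((a + b) * (c * c))
          + (2:ℂ)⁻¹ • (((2:ℂ)⁻¹ • (a * a) + (2:ℂ)⁻¹ • (b * b) + a * b) * (c * c))‖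
        ≤ ‖-(((2:ℂ)⁻¹ • (a * a) + (2:ℂ)⁻¹ • (b * b) + a * b) * c)
            - (2:ℂ)⁻¹ • ((a + b) * (c * c))‖
          + ‖(2:ℂ)⁻¹ • (((2:ℂ)⁻¹ • (a * a) + (2:ℂ)⁻¹ • (b * b) + a * b) * (c * c))‖ :=
        norm_add_le _ _
    _ ≤ (‖((2:ℂ)⁻¹ • (a * a) + (2:ℂ)⁻¹ • (b * b) + a * b) * c‖
          + ‖(2:ℂ)⁻¹ • ((a + b) * (c * c))‖)
          + ‖(2:ℂ)⁻¹ • (((2:ℂ)⁻¹ • (a * a) + (2:ℂ)⁻¹ • (b * b) + a * b) * (c * c))‖ := by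
        refine _root_.add_le_add ((norm_sub_le _ _).trans ?_) le_rfl
        rw [norm_neg]
    _ ≤ 5 * h^3 := by
        rw [norm_smul, norm_smul, e1]
        have q2 := mul_le_mul_of_nonneg_left u2 (by norm_num : (0:ℝ) ≤ 2⁻¹)
        have q3 := mul_le_mul_of_nonneg_left u3 (by norm_num : (0:ℝ) ≤ 2⁻¹)
        have r1 : 2 * h^2 * h = 2 * h^3 := by ring
        have r2 : 2⁻¹ * (2 * h * h^2) = h^3 := by ring
        have r3 : 2⁻¹ * (2 * h^2 * h^2) = h^4 := by ring
        linarith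
  -- assemble
  have hfin : 8 * N^2 * h^3 + 4 * N^2 * h^3 + 2 * N^2 * h^3 + h^3 + (4/3) * h^3 + (2/3) * h^3
      + (3/2) * N * h^3 + 5 * h^3 ≤ (24 * N^2 + 3 * N + 8) * h^3 := by
    have q1 : 0 ≤ N^2 * h^3 := by positivity
    have q2 : 0 ≤ N * h^3 := mul_nonneg (by linarith) h3pos.le
    nlinarith
  refine le_trans ?_ hfin
  calc ‖-(Ra * ((QB + Rb) * (QC + Rc))) - (QA * Rb) * (QC + Rc) - (QA * QB) * Rc
        - (2:ℂ)⁻¹ • ((a + b + c) * (a + b + c))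
        + ((2:ℂ)/3) • ⁅a + b + c, a⁆ + ((1:ℂ)/3) • ⁅a + b + c, b⁆
        - ((-(2:ℂ)⁻¹) • (a * (b * b)) + (-(2:ℂ)⁻¹) • (a * (a * b))
            + (4:ℂ)⁻¹ • (a * (a * (b * b)))) * QC
        - (-(((2:ℂ)⁻¹ • (a * a) + (2:ℂ)⁻¹ • (b * b) + a * b) * c)
            - (2:ℂ)⁻¹ • ((a + b) * (c * c))
            + (2:ℂ)⁻¹ • (((2:ℂ)⁻¹ • (a * a) + (2:ℂ)⁻¹ • (b * b) + a * b) * (c * c)))‖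
      ≤ ‖-(Ra * ((QB + Rb) * (QC + Rc))) - (QA * Rb) * (QC + Rc) - (QA * QB) * Rc
        - (2:ℂ)⁻¹ • ((a + b + c) * (a + b + c))
        + ((2:ℂ)/3) • ⁅a + b + c, a⁆ + ((1:ℂ)/3) • ⁅a + b + c, b⁆
        - ((-(2:ℂ)⁻¹) • (a * (b * b)) + (-(2:ℂ)⁻¹) • (a * (a * b))
            + (4:ℂ)⁻¹ • (a * (a * (b * b)))) * QC‖
        + ‖-(((2:ℂ)⁻¹ • (a * a) + (2:ℂ)⁻¹ • (b * b) + a * b) * c)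
            - (2:ℂ)⁻¹ • ((a + b) * (c * c))
            + (2:ℂ)⁻¹ • (((2:ℂ)⁻¹ • (a * a) + (2:ℂ)⁻¹ • (b * b) + a * b) * (c * c))‖ :=
      norm_sub_le _ _
  _ ≤ (‖-(Ra * ((QB + Rb) * (QC + Rc))) - (QA * Rb) * (QC + Rc) - (QA * QB) * Rc
        - (2:ℂ)⁻¹ • ((a + b + c) * (a + b + c))
        + ((2:ℂ)/3) • ⁅a + b + c, a⁆ + ((1:ℂ)/3) • ⁅a + b + c, b⁆‖
        + ‖((-(2:ℂ)⁻¹) • (a * (b * b)) + (-(2:ℂ)⁻¹) • (a * (a * b))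
            + (4:ℂ)⁻¹ • (a * (a * (b * b)))) * QC‖) + 5 * h^3 :=
      _root_.add_le_add (norm_sub_le _ _) tH
  _ ≤ ((‖-(Ra * ((QB + Rb) * (QC + Rc))) - (QA * Rb) * (QC + Rc) - (QA * QB) * Rc
        - (2:ℂ)⁻¹ • ((a + b + c) * (a + b + c))
        + ((2:ℂ)/3) • ⁅a + b + c, a⁆‖ + ‖((1:ℂ)/3) • ⁅a + b + c, b⁆‖)
        + (3/2) * N * h^3) + 5 * h^3 :=
      _root_.add_le_add (_root_.add_le_add (norm_add_le _ _) tG) le_rfl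
  _ ≤ (((‖-(Ra * ((QB + Rb) * (QC + Rc))) - (QA * Rb) * (QC + Rc) - (QA * QB) * Rc
        - (2:ℂ)⁻¹ • ((a + b + c) * (a + b + c))‖ + ‖((2:ℂ)/3) • ⁅a + b + c, a⁆‖)
        + (2/3) * h^3) + (3/2) * N * h^3) + 5 * h^3 := by
      refine _root_.add_le_add (_root_.add_le_add (_root_.add_le_add (norm_add_le _ _) tF) le_rfl) le_rfl
  _ ≤ ((((‖-(Ra * ((QB + Rb) * (QC + Rc))) - (QA * Rb) * (QC + Rc) - (QA * QB) * Rc‖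
        + ‖(2:ℂ)⁻¹ • ((a + b + c) * (a + b + c))‖) + (4/3) * h^3)
        + (2/3) * h^3) + (3/2) * N * h^3) + 5 * h^3 := by
      refine _root_.add_le_add (_root_.add_le_add (_root_.add_le_add (_root_.add_le_add (norm_sub_le _ _) tE) le_rfl)
        le_rfl) le_rfl
  _ ≤ (((((‖-(Ra * ((QB + Rb) * (QC + Rc))) - (QA * Rb) * (QC + Rc)‖
        + ‖(QA * QB) * Rc‖) + h^3) + (4/3) * h^3)
        + (2/3) * h^3) + (3/2) * N * h^3) + 5 * h^3 := by
      refine _root_.add_le_add (_root_.add_le_add (_root_.add_le_add (add_le_add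
        (_root_.add_le_add (norm_sub_le _ _) tD) le_rfl) le_rfl) le_rfl) le_rfl
  _ ≤ ((((((‖Ra * ((QB + Rb) * (QC + Rc))‖ + ‖(QA * Rb) * (QC + Rc)‖)
        + 2 * N^2 * h^3) + h^3) + (4/3) * h^3)
        + (2/3) * h^3) + (3/2) * N * h^3) + 5 * h^3 := by
      refine _root_.add_le_add (_root_.add_le_add (_root_.add_le_add (_root_.add_le_add (add_le_add
        (_root_.add_le_add ((norm_sub_le _ _).trans_eq (by rw [norm_neg])) tC)
        le_rfl) le_rfl) le_rfl) le_rfl) le_rfl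
  _ ≤ 8 * N^2 * h^3 + 4 * N^2 * h^3 + 2 * N^2 * h^3 + h^3 + (4/3) * h^3 + (2/3) * h^3
      + (3/2) * N * h^3 + 5 * h^3 := by
      exact _root_.add_le_add (_root_.add_le_add (_root_.add_le_add (_root_.add_le_add
        (_root_.add_le_add (_root_.add_le_add (_root_.add_le_add tA tB) le_rfl) le_rfl)
        le_rfl) le_rfl) le_rfl) le_rfl
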